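/- Let A(k) be a well-placed sequence in SL_n(ℂ). Then the images of the columns of A(k) in projective space converge: for each column index h, the class [column_h(A(k))] in ℙ^{n−1}(ℂ) converges to [e₁] = [(1, 0, …, 0)] as k → ∞. Consequently the sequence (π(A(k))) in (ℙ^{n−1}(ℂ))ⁿ converges to ([e₁], …, [e₁]), whose column vectors are not linearly independent, so {π(A(k))} is a discrete subset of the open set of tuples of linearly independent lines. -/

import Mathlib

open Filter

/-- The quotient topology on projective space ℙ(ℂⁿ). -/
noncomputable instance projectivizationTopology (n : ℕ) :
    TopologicalSpace (Projectivization ℂ (Fin n → ℂ)) :=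
  instTopologicalSpaceQuotient


noncomputable def pratio {n : ℕ} [NeZero n] (v : {v : Fin n → ℂ // v ≠ 0}) : ℝ :=
  (∑ j ∈ Finset.univ.filter (· ≠ (0 : Fin n)), ‖(v : Fin n → ℂ) j‖ ^ 2) /
    (∑ j, ‖(v : Fin n → ℂ) j‖ ^ 2)

lemma pden_pos {n : ℕ} [NeZero n] (v : {v : Fin n → ℂ // v ≠ 0}) :
    0 < ∑ j, ‖(v : Fin n → ℂ) j‖ ^ 2 := by
  obtain ⟨j, hj⟩ := Function.ne_iff.mp v.2
  exact Finset.sum_pos' (fun i _ => by positivity)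
    ⟨j, Finset.mem_univ j, pow_pos (norm_pos_iff.mpr hj) 2⟩

lemma pratio_scale {n : ℕ} [NeZero n] (a b : {v : Fin n → ℂ // v ≠ 0}) (t : ℂ)
    (h : (a : Fin n → ℂ) = t • (b : Fin n → ℂ)) : pratio a = pratio b := by
  have ht : t ≠ 0 := by rintro rfl; exact a.2 (by simpa using h)
  have key : ∀ j, ‖(a : Fin n → ℂ) j‖ ^ 2 = ‖t‖ ^ 2 * ‖(b : Fin n → ℂ) j‖ ^ 2 := by
    intro j
    rw [h]; simp [Pi.smul_apply, smul_eq_mul, norm_mul, mul_pow]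
  have ht2 : (‖t‖ : ℝ) ^ 2 ≠ 0 := pow_ne_zero 2 (norm_ne_zero_iff.mpr ht)
  simp only [pratio, key, ← Finset.mul_sum]
  rw [mul_div_mul_left _ _ ht2]

lemma continuous_pratio {n : ℕ} [NeZero n] : Continuous (pratio (n := n)) := by
  apply Continuous.div
  · exact continuous_finset_sum _ fun j _ =>
      (((continuous_apply j).comp continuous_subtype_val).norm.pow 2)
  · exact continuous_finset_sum _ fun j _ =>
      (((continuous_apply j).comp continuous_subtype_val).norm.pow 2)
  · exact fun v => (pden_pos v).ne'

noncomputable def Gfun {n : ℕ} [NeZero n] : Projectivization ℂ (Fin n → ℂ) → ℝ :=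
  Projectivization.lift pratio (fun a b t h => pratio_scale a b t h)

lemma continuous_Gfun {n : ℕ} [NeZero n] : Continuous (Gfun (n := n)) :=
  continuous_pratio.quotient_lift _

lemma neBot_inf_of_continuous {X Y : Type*} [TopologicalSpace X] [TopologicalSpace Y]
    {g : X → Y} (hg : Continuous g) {a b : X} (h : (nhds a ⊓ nhds b).NeBot) :
    (nhds (g a) ⊓ nhds (g b)).NeBot :=
  (h.map g).mono (le_inf
    ((Filter.map_mono inf_le_left).trans (hg.tendsto a))
    ((Filter.map_mono inf_le_right).trans (hg.tendsto b)))

lemma Gfun_mk_eq_zero_iff {n : ℕ} [NeZero n] (v : Fin n → ℂ) (hv : v ≠ 0) :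
    Gfun (Projectivization.mk ℂ v hv) = 0 ↔ ∀ j ≠ 0, v j = 0 := by
  have h0 : Gfun (Projectivization.mk ℂ v hv) = pratio ⟨v, hv⟩ := rfl
  rw [h0]
  unfold pratio
  rw [div_eq_zero_iff]
  have hd := pden_pos ⟨v, hv⟩
  simp only [hd.ne', or_false]
  rw [Finset.sum_eq_zero_iff_of_nonneg (fun j _ => by positivity)]
  constructor
  · intro H j hj
    have := H j (Finset.mem_filter.mpr ⟨Finset.mem_univ _, hj⟩)
    simpa [pow_eq_zero_iff] using this
  · intro H j hj
    rw [H j (Finset.mem_filter.mp hj).2]; simp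

lemma mk_eq_e1 {n : ℕ} [NeZero n] (v : Fin n → ℂ) (hv : v ≠ 0) (H : ∀ j ≠ 0, v j = 0)
    (he : (fun j : Fin n => if j = 0 then (1:ℂ) else 0) ≠ 0) :
    Projectivization.mk ℂ v hv
      = Projectivization.mk ℂ (fun j : Fin n => if j = 0 then (1:ℂ) else 0) he := by
  rw [Projectivization.mk_eq_mk_iff']
  refine ⟨v 0, funext fun j => ?_⟩
  by_cases hj : j = 0
  · subst hj; simp
  · simp [hj, H j hj]

/-- for a well-placed sequence A(k) in SL_n(ℂ), each column converges
projectively to [e₁]; the tuple of projective columns converges to ([e₁],…,[e₁]), whose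
representatives are not linearly independent, so the sequence of tuples does not cluster
at any tuple of linearly independent lines (i.e. its image is discrete in S/T). -/
theorem stmt16 {n : ℕ} [NeZero n] (hn : 2 ≤ n) (A : ℕ → Fin n → Fin n → ℂ)
    (hdet : ∀ k, Matrix.det (Matrix.of (A k)) = 1)
    (hnz : ∀ k i j, A k i j ≠ 0)
    (hrow : ∀ j h : Fin n, j ≠ 0 →
      StrictMono (fun k => ‖A k 0 h / A k j h‖) ∧
      ¬ BddAbove (Set.range fun k => ‖A k 0 h / A k j h‖))
    (hcol : ∀ j h : Fin n, j ≠ 0 →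
      StrictMono (fun k => ‖A k h 0 / A k h j‖) ∧
      ¬ BddAbove (Set.range fun k => ‖A k h 0 / A k h j‖)) :
    (∀ h : Fin n,
      Tendsto (fun k => (fun j : Fin n => A k j h / A k 0 h)) atTop
        (nhds (fun j : Fin n => if j = 0 then (1:ℂ) else 0))) ∧
    (∀ h : Fin n,
      Tendsto (fun k => Projectivization.mk ℂ (fun j : Fin n => A k j h)
          (fun h0 => hnz k 0 h (congrFun h0 0))) atTop
        (nhds (Projectivization.mk ℂ (fun j : Fin n => if j = 0 then (1:ℂ) else 0)
          (fun h0 => one_ne_zero ((if_pos rfl).symm.trans (congrFun h0 0)))))) ∧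
    ¬ LinearIndependent ℂ (fun _ : Fin n =>
        (Projectivization.mk ℂ (fun j : Fin n => if j = 0 then (1:ℂ) else 0)
          (fun h0 => one_ne_zero ((if_pos rfl).symm.trans (congrFun h0 0)))).rep) ∧
    ∀ p : Fin n → Projectivization ℂ (Fin n → ℂ),
      LinearIndependent ℂ (fun i => (p i).rep) →
      ¬ MapClusterPt p atTop (fun k => fun h : Fin n =>
          Projectivization.mk ℂ (fun j : Fin n => A k j h)
            (fun h0 => hnz k 0 h (congrFun h0 0))) := by
  have h01 : (0 : Fin n) ≠ 1 := by
    intro h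
    have h1 : n = 1 := by rwa [eq_comm, Fin.one_eq_zero_iff] at h
    omega
  -- part 1
  have h1 : ∀ h : Fin n,
      Tendsto (fun k => (fun j : Fin n => A k j h / A k 0 h)) atTop
        (nhds (fun j : Fin n => if j = 0 then (1:ℂ) else 0)) := by
    intro h
    rw [tendsto_pi_nhds]
    intro j
    by_cases hj : j = 0
    · subst hj
      simp only [if_pos rfl]
      have : (fun k => A k 0 h / A k 0 h) = fun _ => (1:ℂ) :=
        funext fun k => div_self (hnz k 0 h)
      simpa [this] using tendsto_const_nhds
    · simp only [if_neg hj]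
      have htop : Tendsto (fun k => ‖A k 0 h / A k j h‖) atTop atTop :=
        tendsto_atTop_atTop_of_monotone' (hrow j h hj).1.monotone (hrow j h hj).2
      have hinv : Tendsto (fun k => (‖A k 0 h / A k j h‖)⁻¹) atTop (nhds 0) :=
        htop.inv_tendsto_atTop
      rw [tendsto_zero_iff_norm_tendsto_zero]
      convert hinv using 2 with k
      rw [norm_div, norm_div, inv_div]
  -- part 2
  have h2 : ∀ h : Fin n,
      Tendsto (fun k => Projectivization.mk ℂ (fun j : Fin n => A k j h)
          (fun h0 => hnz k 0 h (congrFun h0 0))) atTop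
        (nhds (Projectivization.mk ℂ (fun j : Fin n => if j = 0 then (1:ℂ) else 0)
          (fun h0 => one_ne_zero ((if_pos rfl).symm.trans (congrFun h0 0))))) := by
    intro h
    have hsc : ∀ k, (fun j : Fin n => A k j h / A k 0 h) ≠ 0 := by
      intro k h0
      have := congrFun h0 0
      rw [div_self (hnz k 0 h)] at this
      exact one_ne_zero this
    have key : ∀ k, Projectivization.mk ℂ (fun j : Fin n => A k j h)
        (fun h0 => hnz k 0 h (congrFun h0 0))
        = Projectivization.mk ℂ (fun j : Fin n => A k j h / A k 0 h) (hsc k) := by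
      intro k
      rw [Projectivization.mk_eq_mk_iff']
      exact ⟨A k 0 h, funext fun j => by
        simp [div_mul_eq_mul_div, mul_div_assoc, mul_div_cancel_left₀ _ (hnz k 0 h),
          mul_div_cancel₀ _ (hnz k 0 h), mul_comm]⟩
    simp only [key]
    have hmk : Continuous (fun v : {v : Fin n → ℂ // v ≠ 0} =>
        (Quotient.mk'' v : Projectivization ℂ (Fin n → ℂ))) := continuous_quotient_mk'
    have hsub : Tendsto (fun k => (⟨fun j : Fin n => A k j h / A k 0 h, hsc k⟩ :
        {v : Fin n → ℂ // v ≠ 0})) atTop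
        (nhds ⟨fun j : Fin n => if j = 0 then (1:ℂ) else 0,
          fun h0 => one_ne_zero ((if_pos rfl).symm.trans (congrFun h0 0))⟩) :=
      tendsto_subtype_rng.mpr (h1 h)
    exact (hmk.tendsto _).comp hsub
  refine ⟨h1, h2, ?_, ?_⟩
  · intro hLI
    exact h01 (hLI.injective rfl)
  · intro p hp hc
    set q : Projectivization ℂ (Fin n → ℂ) :=
      Projectivization.mk ℂ (fun j : Fin n => if j = 0 then (1:ℂ) else 0)
        (fun h0 => one_ne_zero ((if_pos rfl).symm.trans (congrFun h0 0))) with hq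
    have hprod : Tendsto (fun k => fun h : Fin n =>
        Projectivization.mk ℂ (fun j : Fin n => A k j h)
          (fun h0 => hnz k 0 h (congrFun h0 0))) atTop (nhds (fun _ : Fin n => q)) :=
      tendsto_pi_nhds.mpr fun h => h2 h
    have hcl : ClusterPt p (nhds (fun _ : Fin n => q)) := ClusterPt.mono hc hprod
    -- p 0 ≠ p 1
    have hp01 : p 0 ≠ p 1 := by
      intro h
      exact h01 (hp.injective (by simp [h]))
    obtain ⟨i, hi⟩ : ∃ i : Fin n, p i ≠ q := by
      by_cases h0 : p 0 = q
      · exact ⟨1, fun h => hp01 (h0.trans h.symm)⟩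
      · exact ⟨0, h0⟩
    have hGi : Gfun (p i) ≠ Gfun q := by
      have hGq : Gfun q = 0 := by
        rw [hq, Gfun_mk_eq_zero_iff]
        intro j hj; simp [hj]
      rw [hGq]
      intro hG
      obtain ⟨v, hv, hmkeq⟩ : ∃ (v : Fin n → ℂ) (hv : v ≠ 0),
          Projectivization.mk ℂ v hv = p i :=
        Projectivization.ind (fun v hv => ⟨v, hv, rfl⟩) (p i)
      rw [← hmkeq] at hG
      exact hi (hmkeq.symm.trans (mk_eq_e1 v hv ((Gfun_mk_eq_zero_iff v hv).mp hG) _))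
    have hne1 : (nhds (p i) ⊓ nhds q).NeBot :=
      neBot_inf_of_continuous (continuous_apply i) hcl
    have hne2 : (nhds (Gfun (p i)) ⊓ nhds (Gfun q)).NeBot :=
      neBot_inf_of_continuous continuous_Gfun hne1
    exact hne2.ne (disjoint_nhds_nhds.mpr hGi).eq_bot
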